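/- Let q = q₁q₂ with q₁, q₂ distinct primes, and let m, n be integers with gcd(mn, q) = 1. Then the sum over even primitive Dirichlet characters χ mod q of χ(m)·χ̄(n)·τ(χ) equals (1/2)·∑_{±} (φ(q₁)·e(±m̄₁·q̄₂·n/q₁) + 1)·(φ(q₂)·e(±m̄₂·q̄₁·n/q₂) + 1), where m̄₁·m ≡ 1 mod q₁, m̄₂·m ≡ 1 mod q₂, q̄₂·q₂ ≡ 1 mod q₁, and q̄₁·q₁ ≡ 1 mod q₂. -/

import Mathlib

open Complex

/-- `e(x) = exp(2πix)`. -/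
noncomputable def e (x : ℝ) : ℂ := Complex.exp (2 * Real.pi * Complex.I * x)

/-- The Gauss sum `τ(χ) = ∑_{a mod N} χ(a) e(a/N)` of a Dirichlet character mod `N`. -/
noncomputable def gaussTau (N : ℕ) [NeZero N] (χ : DirichletCharacter ℂ N) : ℂ :=
  ∑ a : ZMod N, χ a * e ((a.val : ℝ) / N)

namespace S7

open Finset DirichletCharacter
open scoped Classical

set_option linter.unusedSectionVars false
set_option linter.unusedTactic false
set_option maxHeartbeats 1000000

/-! ### Lemmas about `e` and the standard additive character -/

lemma e_add (x y : ℝ) : e (x + y) = e x * e y := by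
  rw [e, e, e, ← Complex.exp_add]; congr 1; push_cast; ring

lemma e_int (k : ℤ) : e k = 1 := by
  rw [e]
  have : 2 * (Real.pi : ℂ) * Complex.I * (k : ℝ) = (k : ℤ) * (2 * Real.pi * Complex.I) := by
    push_cast; ring
  rw [this, Complex.exp_int_mul_two_pi_mul_I]

lemma e_eq_of_add_int (x : ℝ) (k : ℤ) : e (x + k) = e x := by
  rw [e_add, e_int, mul_one]

section N

variable {N : ℕ} [NeZero N]

lemma stdAddChar_eq_e (a : ZMod N) : ZMod.stdAddChar a = e ((a.val : ℝ) / N) := by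
  rw [ZMod.stdAddChar_apply, ZMod.toCircle_apply, e]
  push_cast
  ring_nf

lemma stdAddChar_intCast (z : ℤ) : ZMod.stdAddChar ((z : ZMod N)) = e ((z : ℝ) / N) := by
  rw [ZMod.stdAddChar_coe, e]; push_cast; ring_nf

lemma sum_stdAddChar_mul {d : ZMod N} (hd : d ≠ 0) :
    ∑ s : ZMod N, ZMod.stdAddChar (d * s) = 0 :=
  AddChar.sum_eq_zero_of_ne_one (ZMod.isPrimitive_stdAddChar N hd)

lemma gaussTau_eq (χ : DirichletCharacter ℂ N) :
    gaussTau N χ = ∑ a : ZMod N, χ a * ZMod.stdAddChar a := by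
  rw [gaussTau]
  exact Finset.sum_congr rfl fun a _ => by rw [stdAddChar_eq_e]

lemma mulLeft_bijective {M : Type*} [CommMonoid M] {c : M} (hc : IsUnit c) :
    Function.Bijective (fun t : M => c * t) := by
  obtain ⟨u, rfl⟩ := hc
  constructor
  · intro a b h
    simpa using congrArg (fun x => (↑u⁻¹ : M) * x) h
  · intro a
    exact ⟨↑u⁻¹ * a, by simp [← mul_assoc]⟩

lemma tau_twist (χ : DirichletCharacter ℂ N) {mz nz c : ZMod N}
    (hn : IsUnit nz) (hc : IsUnit c) (hmc : mz * c = nz) :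
    χ mz * (starRingEnd ℂ) (χ nz) * gaussTau N χ
      = ∑ t : ZMod N, χ t * ZMod.stdAddChar (c * t) := by
  have hconj : (starRingEnd ℂ) (χ nz) = χ⁻¹ nz := by
    rw [starRingEnd_apply]
    exact MulChar.star_apply' χ nz
  have hre : ∑ a : ZMod N, χ a * ZMod.stdAddChar a
      = ∑ t : ZMod N, χ (c * t) * ZMod.stdAddChar (c * t) :=
    (Fintype.sum_bijective _ (mulLeft_bijective hc)
      (fun t => χ (c * t) * ZMod.stdAddChar (c * t))
      (fun a => χ a * ZMod.stdAddChar a) (fun t => rfl)).symm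
  rw [gaussTau_eq, hconj, hre, Finset.mul_sum]
  refine Finset.sum_congr rfl fun t _ => ?_
  rw [map_mul χ c t]
  have key : χ mz * χ⁻¹ nz * (χ c * χ t * ZMod.stdAddChar (c * t))
      = ((χ mz * χ c) * χ⁻¹ nz) * (χ t * ZMod.stdAddChar (c * t)) := by ring
  rw [key, ← map_mul, hmc]
  have hcancel : χ nz * χ⁻¹ nz = 1 := by
    have h0 : (χ * χ⁻¹) nz = χ nz * χ⁻¹ nz := rfl
    rw [← h0, mul_inv_cancel χ]
    exact MulChar.one_apply hn
  rw [hcancel, one_mul]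

lemma one_char_apply {n : ℕ} (s : ZMod n) :
    (1 : DirichletCharacter ℂ n) s = if IsUnit s then 1 else 0 := by
  by_cases h : IsUnit s
  · simp [MulChar.one_apply h, h]
  · simp [MulChar.map_nonunit _ h, h]

lemma F_eval {p : ℕ} [Fact p.Prime] (s : ZMod p) :
    (∑ ψ ∈ univ.filter (· ≠ (1 : DirichletCharacter ℂ p)), ψ s)
      = (if s = 1 then (p.totient : ℂ) else 0) - (if s = 0 then 0 else 1) := by
  rw [Finset.filter_ne', Finset.sum_erase_eq_sub (mem_univ _)]
  rw [DirichletCharacter.sum_characters_eq, one_char_apply]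
  congr 1
  rcases eq_or_ne s 0 with rfl | h
  · simp
  · simp [isUnit_iff_ne_zero.mpr h, h]

lemma G_eval {p : ℕ} [Fact p.Prime] {d : ZMod p} (hd : d ≠ 0) :
    ∑ s : ZMod p, (∑ ψ ∈ univ.filter (· ≠ (1 : DirichletCharacter ℂ p)), ψ s)
        * ZMod.stdAddChar (d * s)
      = (p.totient : ℂ) * ZMod.stdAddChar d + 1 := by
  simp_rw [F_eval, sub_mul, Finset.sum_sub_distrib, ite_mul, zero_mul, one_mul]
  have h1 : ∀ s : ZMod p, (if s = 0 then (0:ℂ) else ZMod.stdAddChar (d * s))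
      = ZMod.stdAddChar (d * s) - (if s = 0 then 1 else 0) := by
    intro s
    split_ifs with h
    · simp [h]
    · simp
  simp_rw [h1, Finset.sum_sub_distrib, sum_stdAddChar_mul hd]
  rw [Finset.sum_ite_eq' univ (1 : ZMod p) (fun s => (p.totient : ℂ) * ZMod.stdAddChar (d * s)),
    Finset.sum_ite_eq' univ (0 : ZMod p) (fun _ => (1:ℂ))]
  simp

end N

/-! ### CRT infrastructure -/

lemma prod_isUnit_iff {M N : Type*} [Monoid M] [Monoid N] {a : M} {b : N} :
    IsUnit (a, b) ↔ IsUnit a ∧ IsUnit b := by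
  constructor
  · intro h
    exact ⟨h.map (MonoidHom.fst M N), h.map (MonoidHom.snd M N)⟩
  · rintro ⟨⟨u, rfl⟩, ⟨v, rfl⟩⟩
    exact ⟨⟨(↑u, ↑v), (↑u⁻¹, ↑v⁻¹), by simp [Prod.ext_iff], by simp [Prod.ext_iff]⟩, rfl⟩

variable {q₁ q₂ : ℕ} [NeZero q₁] [NeZero q₂]

/-- the pair of reduction maps as a ring hom -/
noncomputable def f : ZMod (q₁ * q₂) →+* ZMod q₁ × ZMod q₂ :=
  (ZMod.castHom (dvd_mul_right q₁ q₂) (ZMod q₁)).prod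
    (ZMod.castHom (dvd_mul_left q₂ q₁) (ZMod q₂))

lemma f_apply (x : ZMod (q₁ * q₂)) :
    f x = ((ZMod.castHom (dvd_mul_right q₁ q₂) (ZMod q₁)) x,
      (ZMod.castHom (dvd_mul_left q₂ q₁) (ZMod q₂)) x) := rfl

lemma f_bijective (hcop : Nat.Coprime q₁ q₂) :
    Function.Bijective (f (q₁ := q₁) (q₂ := q₂)) := by
  have : NeZero (q₁ * q₂) := ⟨mul_ne_zero (NeZero.ne q₁) (NeZero.ne q₂)⟩
  rw [Fintype.bijective_iff_injective_and_card]
  refine ⟨?_, by simp [ZMod.card]⟩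
  rw [injective_iff_map_eq_zero]
  intro x hx
  have h1 : (ZMod.castHom (dvd_mul_right q₁ q₂) (ZMod q₁)) x = 0 := congrArg Prod.fst hx
  have h2 : (ZMod.castHom (dvd_mul_left q₂ q₁) (ZMod q₂)) x = 0 := congrArg Prod.snd hx
  rw [ZMod.castHom_apply, ← ZMod.natCast_val, ZMod.natCast_eq_zero_iff] at h1 h2
  have hdvd := Nat.Coprime.mul_dvd_of_dvd_of_dvd hcop h1 h2
  have hv : x.val = 0 := Nat.eq_zero_of_dvd_of_lt hdvd (ZMod.val_lt x)
  exact (ZMod.val_eq_zero x).mp hv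

/-- f as ring equiv -/
noncomputable def E (hcop : Nat.Coprime q₁ q₂) : ZMod (q₁ * q₂) ≃+* ZMod q₁ × ZMod q₂ :=
  RingEquiv.ofBijective f (f_bijective hcop)

lemma E_apply (hcop : Nat.Coprime q₁ q₂) (x : ZMod (q₁ * q₂)) : E hcop x = f x := rfl

lemma isUnit_iff (hcop : Nat.Coprime q₁ q₂) (x : ZMod (q₁ * q₂)) :
    IsUnit x ↔ IsUnit ((ZMod.castHom (dvd_mul_right q₁ q₂) (ZMod q₁)) x)
      ∧ IsUnit ((ZMod.castHom (dvd_mul_left q₂ q₁) (ZMod q₂)) x) := by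
  rw [← prod_isUnit_iff, ← f_apply]
  constructor
  · exact fun h => h.map (f (q₁ := q₁) (q₂ := q₂))
  · intro h
    have : x = (E hcop).symm (f x) := ((E hcop).symm_apply_apply x).symm
    rw [this]
    exact h.map (E hcop).symm.toRingHom

lemma sum_factor (hcop : Nat.Coprime q₁ q₂) (g₁ : ZMod q₁ → ℂ) (g₂ : ZMod q₂ → ℂ) :
    ∑ t : ZMod (q₁ * q₂),
        g₁ ((ZMod.castHom (dvd_mul_right q₁ q₂) (ZMod q₁)) t)
          * g₂ ((ZMod.castHom (dvd_mul_left q₂ q₁) (ZMod q₂)) t)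
      = (∑ a : ZMod q₁, g₁ a) * (∑ b : ZMod q₂, g₂ b) := by
  rw [Finset.sum_mul_sum]
  rw [show (∑ a : ZMod q₁, ∑ b : ZMod q₂, g₁ a * g₂ b)
      = ∑ p : ZMod q₁ × ZMod q₂, g₁ p.1 * g₂ p.2 from
      (Fintype.sum_prod_type (f := fun p => g₁ p.1 * g₂ p.2)).symm]
  exact Fintype.sum_bijective _ (f_bijective hcop)
    (fun t => g₁ ((ZMod.castHom (dvd_mul_right q₁ q₂) (ZMod q₁)) t)
      * g₂ ((ZMod.castHom (dvd_mul_left q₂ q₁) (ZMod q₂)) t))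
    (fun p => g₁ p.1 * g₂ p.2) (fun t => rfl)

/-- the product character -/
noncomputable def Psi (χp : DirichletCharacter ℂ q₁ × DirichletCharacter ℂ q₂) :
    DirichletCharacter ℂ (q₁ * q₂) :=
  changeLevel (dvd_mul_right q₁ q₂) χp.1 * changeLevel (dvd_mul_left q₂ q₁) χp.2

lemma Psi_apply (hcop : Nat.Coprime q₁ q₂)
    (χp : DirichletCharacter ℂ q₁ × DirichletCharacter ℂ q₂) (t : ZMod (q₁ * q₂)) :
    Psi χp t = χp.1 ((ZMod.castHom (dvd_mul_right q₁ q₂) (ZMod q₁)) t)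
      * χp.2 ((ZMod.castHom (dvd_mul_left q₂ q₁) (ZMod q₂)) t) := by
  by_cases ht : IsUnit t
  · rw [Psi, MulChar.mul_apply]
    congr 1
    · rw [← ht.unit_spec, changeLevel_eq_cast_of_dvd, ZMod.castHom_apply]
    · rw [← ht.unit_spec, changeLevel_eq_cast_of_dvd, ZMod.castHom_apply]
  · rw [Psi, MulChar.mul_apply]
    rw [MulChar.map_nonunit _ ht, MulChar.map_nonunit _ ht, zero_mul]
    rcases (not_and_or.mp (fun h => ht ((isUnit_iff hcop t).mpr h))) with h | h
    · rw [MulChar.map_nonunit _ h, zero_mul]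
    · rw [MulChar.map_nonunit _ h, mul_zero]

lemma E_symm_fst (hcop : Nat.Coprime q₁ q₂) (a : ZMod q₁) (b : ZMod q₂) :
    (ZMod.castHom (dvd_mul_right q₁ q₂) (ZMod q₁)) ((E hcop).symm (a, b)) = a :=
  congrArg Prod.fst ((E hcop).apply_symm_apply (a, b))

lemma E_symm_snd (hcop : Nat.Coprime q₁ q₂) (a : ZMod q₁) (b : ZMod q₂) :
    (ZMod.castHom (dvd_mul_left q₂ q₁) (ZMod q₂)) ((E hcop).symm (a, b)) = b :=
  congrArg Prod.snd ((E hcop).apply_symm_apply (a, b))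

lemma E_symm_isUnit (hcop : Nat.Coprime q₁ q₂) {a : ZMod q₁} {b : ZMod q₂}
    (ha : IsUnit a) (hb : IsUnit b) : IsUnit ((E hcop).symm (a, b)) := by
  rw [isUnit_iff hcop, E_symm_fst, E_symm_snd]
  exact ⟨ha, hb⟩

lemma Psi_injective (hcop : Nat.Coprime q₁ q₂) :
    Function.Injective (Psi (q₁ := q₁) (q₂ := q₂)) := by
  intro χp χp' h
  have key : ∀ (a : (ZMod q₁)ˣ) (b : (ZMod q₂)ˣ),
      χp.1 a * χp.2 b = χp'.1 a * χp'.2 b := by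
    intro a b
    have ht := congrFun (congrArg (fun χ : DirichletCharacter ℂ (q₁*q₂) => (χ : ZMod (q₁*q₂) → ℂ))
      h) ((E hcop).symm ((a : ZMod q₁), (b : ZMod q₂)))
    simpa only [Psi_apply hcop, E_symm_fst, E_symm_snd] using ht
  have h1 : χp.1 = χp'.1 := by
    refine MulChar.ext fun a => ?_
    have := key a 1
    simpa using this
  have h2 : χp.2 = χp'.2 := by
    refine MulChar.ext fun b => ?_
    have := key 1 b
    simpa using this
  exact Prod.ext h1 h2

lemma card_dc (n : ℕ) [NeZero n] : Fintype.card (DirichletCharacter ℂ n) = n.totient := by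
  rw [← Nat.card_eq_fintype_card]
  exact DirichletCharacter.card_eq_totient_of_hasEnoughRootsOfUnity ℂ n

lemma Psi_bijective (hcop : Nat.Coprime q₁ q₂) :
    Function.Bijective (Psi (q₁ := q₁) (q₂ := q₂)) := by
  have : NeZero (q₁ * q₂) := ⟨mul_ne_zero (NeZero.ne q₁) (NeZero.ne q₂)⟩
  rw [Fintype.bijective_iff_injective_and_card]
  refine ⟨Psi_injective hcop, ?_⟩
  rw [Fintype.card_prod, card_dc, card_dc, card_dc, Nat.totient_mul hcop]

lemma psi_prim_iff (hq₁ : q₁.Prime) (hq₂ : q₂.Prime) (hcop : Nat.Coprime q₁ q₂)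
    (χp : DirichletCharacter ℂ q₁ × DirichletCharacter ℂ q₂) :
    (Psi χp).IsPrimitive ↔ χp.1 ≠ 1 ∧ χp.2 ≠ 1 := by
  have : NeZero (q₁ * q₂) := ⟨mul_ne_zero (NeZero.ne q₁) (NeZero.ne q₂)⟩
  constructor
  · intro hprim
    constructor
    · intro h1
      have hft : (Psi χp).FactorsThrough q₂ := by
        refine ⟨dvd_mul_left q₂ q₁, χp.2, ?_⟩
        rw [Psi, h1, changeLevel_one, one_mul]
      have hle : (Psi χp).conductor ≤ q₂ := Nat.sInf_le hft
      rw [DirichletCharacter.IsPrimitive] at hprim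
      have : q₁ * q₂ ≤ q₂ := hprim ▸ hle
      have h2 := Nat.lt_of_lt_of_le ((Nat.lt_mul_iff_one_lt_left q₂.pos_of_neZero).mpr
        hq₁.one_lt) this
      exact absurd h2 (lt_irrefl _)
    · intro h2
      have hft : (Psi χp).FactorsThrough q₁ := by
        refine ⟨dvd_mul_right q₁ q₂, χp.1, ?_⟩
        rw [Psi, h2, changeLevel_one, mul_one]
      have hle : (Psi χp).conductor ≤ q₁ := Nat.sInf_le hft
      rw [DirichletCharacter.IsPrimitive] at hprim
      have : q₁ * q₂ ≤ q₁ := hprim ▸ hle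
      have h2 := Nat.lt_of_lt_of_le ((Nat.lt_mul_iff_one_lt_right q₁.pos_of_neZero).mpr
        hq₂.one_lt) this
      exact absurd h2 (lt_irrefl _)
  · rintro ⟨h1, h2⟩
    set χ := Psi χp with hχ
    have hdl : χ.conductor ∣ q₁ * q₂ := conductor_dvd_level χ
    -- key sub-lemma: χ does not factor through q₁ or q₂
    have nft : ∀ (d : ℕ), d ∣ q₂ → ¬ χ.FactorsThrough d := by
      intro d hd hft
      obtain ⟨hdvd, χ₀, hχ₀⟩ := hft
      -- pick a unit where χp.1 is nontrivial
      have : ∃ a : (ZMod q₁)ˣ, χp.1 a ≠ 1 := by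
        by_contra hall
        push_neg at hall
        exact h1 (MulChar.ext fun a => (hall a).trans (MulChar.one_apply_coe a).symm)
      obtain ⟨a, ha⟩ := this
      set t := (E hcop).symm ((a : ZMod q₁), (1 : ZMod q₂)) with hts
      have htu : IsUnit t := E_symm_isUnit hcop a.isUnit isUnit_one
      have hval : χ t = χp.1 a := by
        rw [hχ, Psi_apply hcop, E_symm_fst, E_symm_snd, map_one, mul_one]
      -- but χ factors through d ∣ q₂, so χ t = χ₀ (cast t), and cast t factors through q₂ → 1
      have hftq₂ : χ = changeLevel (dvd_mul_left q₂ q₁) (changeLevel hd χ₀) := by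
        rw [hχ₀, ← changeLevel_trans]
      have hcast : χ t = (changeLevel hd χ₀) (ZMod.cast t) := by
        rw [hftq₂, ← htu.unit_spec, changeLevel_eq_cast_of_dvd]
      have hcast1 : (ZMod.cast t : ZMod q₂) = 1 := by
        rw [← ZMod.castHom_apply (h := dvd_mul_left q₂ q₁), hts, E_symm_snd]
      rw [hcast1, map_one] at hcast
      exact ha (hval.symm.trans hcast)
    have nft' : ∀ (d : ℕ), d ∣ q₁ → ¬ χ.FactorsThrough d := by
      intro d hd hft
      obtain ⟨hdvd, χ₀, hχ₀⟩ := hft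
      have : ∃ b : (ZMod q₂)ˣ, χp.2 b ≠ 1 := by
        by_contra hall
        push_neg at hall
        exact h2 (MulChar.ext fun b => (hall b).trans (MulChar.one_apply_coe b).symm)
      obtain ⟨b, hb⟩ := this
      set t := (E hcop).symm ((1 : ZMod q₁), (b : ZMod q₂)) with hts
      have htu : IsUnit t := E_symm_isUnit hcop isUnit_one b.isUnit
      have hval : χ t = χp.2 b := by
        rw [hχ, Psi_apply hcop, E_symm_fst, E_symm_snd, map_one, one_mul]
      have hftq₁ : χ = changeLevel (dvd_mul_right q₁ q₂) (changeLevel hd χ₀) := by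
        rw [hχ₀, ← changeLevel_trans]
      have hcast : χ t = (changeLevel hd χ₀) (ZMod.cast t) := by
        rw [hftq₁, ← htu.unit_spec, changeLevel_eq_cast_of_dvd]
      have hcast1 : (ZMod.cast t : ZMod q₁) = 1 := by
        rw [← ZMod.castHom_apply (h := dvd_mul_right q₁ q₂), hts, E_symm_fst]
      rw [hcast1, map_one] at hcast
      exact hb (hval.symm.trans hcast)
    -- now conclude conductor = q₁ * q₂
    have hd1 : q₁ ∣ χ.conductor := by
      by_contra hnd
      have hco : q₁.Coprime χ.conductor := hq₁.coprime_iff_not_dvd.mpr hnd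
      have : χ.conductor ∣ q₂ := (Nat.Coprime.dvd_of_dvd_mul_left hco.symm hdl)
      exact nft _ this (factorsThrough_conductor χ)
    have hd2 : q₂ ∣ χ.conductor := by
      by_contra hnd
      have hco : q₂.Coprime χ.conductor := hq₂.coprime_iff_not_dvd.mpr hnd
      have hmc : χ.conductor ∣ q₂ * q₁ := hdl.trans (dvd_of_eq (mul_comm q₁ q₂))
      have : χ.conductor ∣ q₁ := Nat.Coprime.dvd_of_dvd_mul_left hco.symm hmc
      exact nft' _ this (factorsThrough_conductor χ)
    exact Nat.dvd_antisymm hdl (Nat.Coprime.mul_dvd_of_dvd_of_dvd hcop hd1 hd2)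

open scoped Classical in
lemma sum_prim (hq₁ : q₁.Prime) (hq₂ : q₂.Prime) (hcop : Nat.Coprime q₁ q₂)
    (t : ZMod (q₁ * q₂)) :
    ∑ χ ∈ univ.filter (fun χ : DirichletCharacter ℂ (q₁ * q₂) => χ.IsPrimitive), χ t
      = (∑ ψ₁ ∈ univ.filter (· ≠ (1 : DirichletCharacter ℂ q₁)),
            ψ₁ ((ZMod.castHom (dvd_mul_right q₁ q₂) (ZMod q₁)) t))
        * (∑ ψ₂ ∈ univ.filter (· ≠ (1 : DirichletCharacter ℂ q₂)),
            ψ₂ ((ZMod.castHom (dvd_mul_left q₂ q₁) (ZMod q₂)) t)) := by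
  rw [Finset.sum_mul_sum, ← Finset.sum_product']
  refine (Finset.sum_bij (fun χp _ => Psi χp) ?_ ?_ ?_ ?_).symm
  · intro χp hχp
    simp only [Finset.mem_product, Finset.mem_filter, Finset.mem_univ, true_and] at hχp
    simp only [Finset.mem_filter, Finset.mem_univ, true_and]
    exact (psi_prim_iff hq₁ hq₂ hcop χp).mpr hχp
  · intro a _ b _ hab
    exact Psi_injective hcop hab
  · intro χ hχ
    simp only [Finset.mem_filter, Finset.mem_univ, true_and] at hχ
    obtain ⟨χp, rfl⟩ := (Psi_bijective hcop).2 χ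
    refine ⟨χp, ?_, rfl⟩
    simp only [Finset.mem_product, Finset.mem_filter, Finset.mem_univ, true_and]
    exact (psi_prim_iff hq₁ hq₂ hcop χp).mp hχ
  · intro χp _
    exact (Psi_apply hcop χp t).symm

open scoped Classical in
lemma sum_prim_even (t : ZMod (q₁ * q₂)) :
    ∑ χ ∈ univ.filter (fun χ : DirichletCharacter ℂ (q₁ * q₂) =>
        χ.IsPrimitive ∧ χ (-1) = 1), χ t
      = (1/2 : ℂ) *
        ((∑ χ ∈ univ.filter (fun χ : DirichletCharacter ℂ (q₁ * q₂) => χ.IsPrimitive), χ t)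
          + ∑ χ ∈ univ.filter (fun χ : DirichletCharacter ℂ (q₁ * q₂) => χ.IsPrimitive),
              χ (-t)) := by
  have key : ∀ χ : DirichletCharacter ℂ (q₁ * q₂), χ (-t) = χ (-1) * χ t := by
    intro χ
    rw [← map_mul, neg_one_mul]
  simp_rw [key]
  rw [← Finset.sum_add_distrib]
  have split := Finset.sum_filter_add_sum_filter_not
    (univ.filter (fun χ : DirichletCharacter ℂ (q₁ * q₂) => χ.IsPrimitive))
    (fun χ => χ (-1) = 1) (fun χ : DirichletCharacter ℂ (q₁ * q₂) => χ t + χ (-1) * χ t)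
  rw [← split, Finset.filter_filter]
  have h1 : ∑ χ ∈ univ.filter (fun χ : DirichletCharacter ℂ (q₁ * q₂) =>
      χ.IsPrimitive ∧ χ (-1) = 1), (χ t + χ (-1) * χ t)
      = 2 * ∑ χ ∈ univ.filter (fun χ : DirichletCharacter ℂ (q₁ * q₂) =>
          χ.IsPrimitive ∧ χ (-1) = 1), χ t := by
    rw [Finset.mul_sum]
    refine Finset.sum_congr rfl fun χ hχ => ?_
    simp only [Finset.mem_filter] at hχ
    rw [hχ.2.2, one_mul, two_mul]
  have h2 : ∑ χ ∈ (univ.filter (fun χ : DirichletCharacter ℂ (q₁ * q₂) =>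
      χ.IsPrimitive)).filter (fun χ => ¬ χ (-1) = 1), (χ t + χ (-1) * χ t) = 0 := by
    refine Finset.sum_eq_zero fun χ hχ => ?_
    simp only [Finset.mem_filter] at hχ
    have hsq : χ (-1) * χ (-1) = 1 := by
      rw [← map_mul, neg_one_mul, neg_neg, map_one]
    rcases mul_self_eq_one_iff.mp hsq with h | h
    · exact absurd h hχ.2
    · rw [h]; ring
  rw [h1, h2, add_zero]
  ring

lemma e_split (q₁ q₂ : ℕ) [NeZero q₁] [NeZero q₂] (qb₁ qb₂ k z T : ℤ)
    (hk : qb₂ * q₂ + qb₁ * q₁ - 1 = (q₁ * q₂ : ℕ) * k) :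
    e (((z * T : ℤ) : ℝ) / ((q₁ * q₂ : ℕ) : ℝ))
      = e (((z * qb₂ * T : ℤ) : ℝ) / (q₁ : ℝ)) * e (((z * qb₁ * T : ℤ) : ℝ) / (q₂ : ℝ)) := by
  rw [← e_add]
  have hq1 : (q₁ : ℝ) ≠ 0 := Nat.cast_ne_zero.mpr (NeZero.ne q₁)
  have hq2 : (q₂ : ℝ) ≠ 0 := Nat.cast_ne_zero.mpr (NeZero.ne q₂)
  have hkR : (qb₂ : ℝ) * q₂ + qb₁ * q₁ - 1 = (q₁ : ℝ) * q₂ * k := by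
    have := congrArg (fun x : ℤ => (x : ℝ)) hk
    push_cast at this
    linarith
  have harg : ((z * qb₂ * T : ℤ) : ℝ) / (q₁ : ℝ) + ((z * qb₁ * T : ℤ) : ℝ) / (q₂ : ℝ)
      = ((z * T : ℤ) : ℝ) / ((q₁ * q₂ : ℕ) : ℝ) + ((z * T * k : ℤ) : ℝ) := by
    push_cast
    have hq1' : (q₁ : ℝ) * q₂ ≠ 0 := mul_ne_zero hq1 hq2
    field_simp
    linear_combination (z : ℝ) * T * hkR
  rw [harg, e_eq_of_add_int]

lemma addchar_split (q₁ q₂ : ℕ) [NeZero q₁] [NeZero q₂] (qb₁ qb₂ : ℤ)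
    (hqb₂ : ((qb₂ * q₂ : ℤ) : ZMod q₁) = 1) (hqb₁ : ((qb₁ * q₁ : ℤ) : ZMod q₂) = 1)
    (hcop : Nat.Coprime q₁ q₂) (z : ℤ) (t : ZMod (q₁ * q₂)) :
    ZMod.stdAddChar ((z : ZMod (q₁ * q₂)) * t)
      = ZMod.stdAddChar (((z * qb₂ : ℤ) : ZMod q₁)
            * (ZMod.castHom (dvd_mul_right q₁ q₂) (ZMod q₁) t))
        * ZMod.stdAddChar (((z * qb₁ : ℤ) : ZMod q₂)
            * (ZMod.castHom (dvd_mul_left q₂ q₁) (ZMod q₂) t)) := by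
  -- divisibility fact
  have h1 : (q₁ : ℤ) ∣ (qb₂ * q₂ + qb₁ * q₁ - 1) := by
    rw [← ZMod.intCast_zmod_eq_zero_iff_dvd]
    push_cast
    push_cast at hqb₂
    rw [ZMod.natCast_self]
    linear_combination hqb₂
  have h2 : (q₂ : ℤ) ∣ (qb₂ * q₂ + qb₁ * q₁ - 1) := by
    rw [← ZMod.intCast_zmod_eq_zero_iff_dvd]
    push_cast
    push_cast at hqb₁
    rw [ZMod.natCast_self]
    linear_combination hqb₁
  have hic : IsCoprime (q₁ : ℤ) (q₂ : ℤ) := by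
    rw [Int.isCoprime_iff_gcd_eq_one]
    simpa using hcop
  obtain ⟨k, hk⟩ := hic.mul_dvd h1 h2
  have hk' : qb₂ * (q₂ : ℤ) + qb₁ * q₁ - 1 = ((q₁ * q₂ : ℕ) : ℤ) * k := by
    push_cast
    push_cast at hk
    linarith
  -- rewrite everything through integer casts
  have hT : ((t.val : ℤ) : ZMod (q₁ * q₂)) = t := by
    rw [Int.cast_natCast, ZMod.natCast_val, ZMod.cast_id]
  have hT₁ : (ZMod.castHom (dvd_mul_right q₁ q₂) (ZMod q₁)) t = ((t.val : ℤ) : ZMod q₁) := by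
    rw [ZMod.castHom_apply, Int.cast_natCast, ZMod.natCast_val]
  have hT₂ : (ZMod.castHom (dvd_mul_left q₂ q₁) (ZMod q₂)) t = ((t.val : ℤ) : ZMod q₂) := by
    rw [ZMod.castHom_apply, Int.cast_natCast, ZMod.natCast_val]
  have lhs_eq : (z : ZMod (q₁ * q₂)) * t = ((z * (t.val : ℤ) : ℤ) : ZMod (q₁ * q₂)) := by
    rw [Int.cast_mul, hT]
  rw [lhs_eq, hT₁, hT₂, ← Int.cast_mul, ← Int.cast_mul,
    stdAddChar_intCast, stdAddChar_intCast, stdAddChar_intCast]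
  exact e_split q₁ q₂ qb₁ qb₂ k z (t.val : ℤ) hk'

end S7

open S7 Finset DirichletCharacter in
open scoped Classical in
/-- For `q = q₁q₂` with `q₁ ≠ q₂` primes and `gcd(mn,q)=1`, the sum over even
primitive `χ` mod `q` of `χ(m)χ̄(n)τ(χ)` equals
`(1/2)·∑_± (φ(q₁)·e(±m̄₁q̄₂n/q₁) + 1)·(φ(q₂)·e(±m̄₂q̄₁n/q₂) + 1)`, where `m̄₁m ≡ 1 (q₁)`,
`m̄₂m ≡ 1 (q₂)`, `q̄₂q₂ ≡ 1 (q₁)`, `q̄₁q₁ ≡ 1 (q₂)`. -/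
theorem stmt7 (q₁ q₂ : ℕ) [NeZero q₁] [NeZero q₂] (hq₁ : q₁.Prime) (hq₂ : q₂.Prime)
    (hne : q₁ ≠ q₂) (m n : ℤ) (hmn : IsCoprime (m * n) ((q₁ * q₂ : ℕ) : ℤ))
    (mb₁ mb₂ qb₁ qb₂ : ℤ)
    (hmb₁ : ((mb₁ * m : ℤ) : ZMod q₁) = 1) (hmb₂ : ((mb₂ * m : ℤ) : ZMod q₂) = 1)
    (hqb₂ : ((qb₂ * q₂ : ℤ) : ZMod q₁) = 1) (hqb₁ : ((qb₁ * q₁ : ℤ) : ZMod q₂) = 1) :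
    (∑' χ : {χ : DirichletCharacter ℂ (q₁ * q₂) // χ.IsPrimitive ∧ χ (-1) = 1},
        (χ : DirichletCharacter ℂ (q₁ * q₂)) (m : ZMod (q₁ * q₂)) *
          (starRingEnd ℂ) ((χ : DirichletCharacter ℂ (q₁ * q₂)) (n : ZMod (q₁ * q₂))) *
          gaussTau (q₁ * q₂) (χ : DirichletCharacter ℂ (q₁ * q₂))) =
      (1 / 2 : ℂ) *
        (((Nat.totient q₁ : ℂ) * e (((mb₁ * qb₂ * n : ℤ) : ℝ) / q₁) + 1) *
            ((Nat.totient q₂ : ℂ) * e (((mb₂ * qb₁ * n : ℤ) : ℝ) / q₂) + 1) +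
          ((Nat.totient q₁ : ℂ) * e ((-(mb₁ * qb₂ * n : ℤ) : ℝ) / q₁) + 1) *
            ((Nat.totient q₂ : ℂ) * e ((-(mb₂ * qb₁ * n : ℤ) : ℝ) / q₂) + 1)) := by
  haveI : Fact q₁.Prime := ⟨hq₁⟩
  haveI : Fact q₂.Prime := ⟨hq₂⟩
  have hcop : Nat.Coprime q₁ q₂ := (Nat.coprime_primes hq₁ hq₂).mpr hne
  -- unit facts
  obtain ⟨u, v, huv⟩ := hmn
  have h : (u : ZMod (q₁ * q₂)) * ((m : ZMod (q₁ * q₂)) * (n : ZMod (q₁ * q₂))) = 1 := by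
    have h := congrArg (fun x : ℤ => (x : ZMod (q₁ * q₂))) huv
    simp only [Int.cast_add, Int.cast_mul, Int.cast_one, Int.cast_natCast,
      ZMod.natCast_self, mul_zero, add_zero] at h
    exact h
  have hmu : IsUnit ((m : ℤ) : ZMod (q₁ * q₂)) :=
    IsUnit.of_mul_eq_one ((u : ZMod (q₁ * q₂)) * (n : ZMod (q₁ * q₂))) (by rw [← h]; ring)
  have hnu : IsUnit ((n : ℤ) : ZMod (q₁ * q₂)) :=
    IsUnit.of_mul_eq_one ((u : ZMod (q₁ * q₂)) * (m : ZMod (q₁ * q₂))) (by rw [← h]; ring)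
  -- cast versions of hypotheses
  have hq₁0 : ((q₁ : ℕ) : ZMod q₁) = 0 := ZMod.natCast_self q₁
  have hq₂0 : ((q₂ : ℕ) : ZMod q₂) = 0 := ZMod.natCast_self q₂
  have hmb₁' : (mb₁ : ZMod q₁) * (m : ZMod q₁) = 1 := by push_cast at hmb₁; exact hmb₁
  have hmb₂' : (mb₂ : ZMod q₂) * (m : ZMod q₂) = 1 := by push_cast at hmb₂; exact hmb₂
  have hqb₂' : (qb₂ : ZMod q₁) * (q₂ : ZMod q₁) = 1 := by push_cast at hqb₂; exact hqb₂
  have hqb₁' : (qb₁ : ZMod q₂) * (q₁ : ZMod q₂) = 1 := by push_cast at hqb₁; exact hqb₁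
  -- the integer inverse of m modulo q₁q₂
  set w : ℤ := mb₁ * qb₂ * q₂ + mb₂ * qb₁ * q₁ with hw
  have comp_ext : ∀ x y : ZMod (q₁ * q₂),
      (ZMod.castHom (dvd_mul_right q₁ q₂) (ZMod q₁)) x
        = (ZMod.castHom (dvd_mul_right q₁ q₂) (ZMod q₁)) y →
      (ZMod.castHom (dvd_mul_left q₂ q₁) (ZMod q₂)) x
        = (ZMod.castHom (dvd_mul_left q₂ q₁) (ZMod q₂)) y → x = y := by
    intro x y hx hy
    exact (f_bijective hcop).1 (by rw [f_apply, f_apply, hx, hy])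
  have hwm : ((w * m : ℤ) : ZMod (q₁ * q₂)) = 1 := by
    apply comp_ext
    · rw [map_intCast, map_one, hw]
      push_cast
      linear_combination ((qb₂ : ZMod q₁) * (q₂ : ZMod q₁)) * hmb₁' + hqb₂'
        + ((mb₂ : ZMod q₁) * (qb₁ : ZMod q₁) * (m : ZMod q₁)) * hq₁0
    · rw [map_intCast, map_one, hw]
      push_cast
      linear_combination ((qb₁ : ZMod q₂) * (q₁ : ZMod q₂)) * hmb₂' + hqb₁'
        + ((mb₁ : ZMod q₂) * (qb₂ : ZMod q₂) * (m : ZMod q₂)) * hq₂0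
  have hwm' : ((w : ℤ) : ZMod (q₁ * q₂)) * ((m : ℤ) : ZMod (q₁ * q₂)) = 1 := by
    push_cast at hwm; exact hwm
  have hwu : IsUnit ((w : ℤ) : ZMod (q₁ * q₂)) := IsUnit.of_mul_eq_one _ hwm'
  set c : ZMod (q₁ * q₂) := ((w : ℤ) : ZMod (q₁ * q₂)) * ((n : ℤ) : ZMod (q₁ * q₂)) with hc
  have hcu : IsUnit c := hwu.mul hnu
  have hmc : ((m : ℤ) : ZMod (q₁ * q₂)) * c = ((n : ℤ) : ZMod (q₁ * q₂)) := by
    rw [hc]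
    linear_combination ((n : ZMod (q₁ * q₂))) * hwm'
  have hcz : c = ((w * n : ℤ) : ZMod (q₁ * q₂)) := by rw [hc]; push_cast; ring
  -- reduction of the twisting parameters mod q₁, q₂
  have hd₁p : ((w * n * qb₂ : ℤ) : ZMod q₁) = ((mb₁ * qb₂ * n : ℤ) : ZMod q₁) := by
    rw [hw]; push_cast
    linear_combination ((mb₁ : ZMod q₁) * (qb₂ : ZMod q₁) * (n : ZMod q₁)) * hqb₂'
      + ((mb₂ : ZMod q₁) * (qb₁ : ZMod q₁) * (n : ZMod q₁) * (qb₂ : ZMod q₁)) * hq₁0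
  have hd₂p : ((w * n * qb₁ : ℤ) : ZMod q₂) = ((mb₂ * qb₁ * n : ℤ) : ZMod q₂) := by
    rw [hw]; push_cast
    linear_combination ((mb₂ : ZMod q₂) * (qb₁ : ZMod q₂) * (n : ZMod q₂)) * hqb₁'
      + ((mb₁ : ZMod q₂) * (qb₂ : ZMod q₂) * (n : ZMod q₂) * (qb₁ : ZMod q₂)) * hq₂0
  have hd₁m : ((-(w * n) * qb₂ : ℤ) : ZMod q₁) = ((-(mb₁ * qb₂ * n) : ℤ) : ZMod q₁) := by
    push_cast
    push_cast at hd₁p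
    linear_combination -hd₁p
  have hd₂m : ((-(w * n) * qb₁ : ℤ) : ZMod q₂) = ((-(mb₂ * qb₁ * n) : ℤ) : ZMod q₂) := by
    push_cast
    push_cast at hd₂p
    linear_combination -hd₂p
  -- nonvanishing of the twisting parameters
  have hn₁ : IsUnit ((n : ℤ) : ZMod q₁) := by
    have h1 := congrArg (ZMod.castHom (dvd_mul_right q₁ q₂) (ZMod q₁)) h
    simp only [map_mul, map_one, map_intCast] at h1
    exact IsUnit.of_mul_eq_one ((u : ZMod q₁) * (m : ZMod q₁)) (by rw [← h1]; ring)
  have hn₂ : IsUnit ((n : ℤ) : ZMod q₂) := by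
    have h1 := congrArg (ZMod.castHom (dvd_mul_left q₂ q₁) (ZMod q₂)) h
    simp only [map_mul, map_one, map_intCast] at h1
    exact IsUnit.of_mul_eq_one ((u : ZMod q₂) * (m : ZMod q₂)) (by rw [← h1]; ring)
  have hmb₁u : IsUnit ((mb₁ : ℤ) : ZMod q₁) := IsUnit.of_mul_eq_one _ hmb₁'
  have hmb₂u : IsUnit ((mb₂ : ℤ) : ZMod q₂) := IsUnit.of_mul_eq_one _ hmb₂'
  have hqb₂u : IsUnit ((qb₂ : ℤ) : ZMod q₁) := IsUnit.of_mul_eq_one _ hqb₂'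
  have hqb₁u : IsUnit ((qb₁ : ℤ) : ZMod q₂) := IsUnit.of_mul_eq_one _ hqb₁'
  have hd₁ne : ((mb₁ * qb₂ * n : ℤ) : ZMod q₁) ≠ 0 := by
    have hu : IsUnit ((mb₁ * qb₂ * n : ℤ) : ZMod q₁) := by
      push_cast
      exact (hmb₁u.mul hqb₂u).mul hn₁
    exact hu.ne_zero
  have hd₂ne : ((mb₂ * qb₁ * n : ℤ) : ZMod q₂) ≠ 0 := by
    have hu : IsUnit ((mb₂ * qb₁ * n : ℤ) : ZMod q₂) := by
      push_cast
      exact (hmb₂u.mul hqb₁u).mul hn₂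
    exact hu.ne_zero
  have hd₁nem : ((-(mb₁ * qb₂ * n) : ℤ) : ZMod q₁) ≠ 0 := by
    rw [Int.cast_neg, neg_ne_zero]
    exact hd₁ne
  have hd₂nem : ((-(mb₂ * qb₁ * n) : ℤ) : ZMod q₂) ≠ 0 := by
    rw [Int.cast_neg, neg_ne_zero]
    exact hd₂ne
  -- key computation for a generic twist
  have key : ∀ (z : ℤ) (d₁ : ZMod q₁) (d₂ : ZMod q₂),
      ((z * qb₂ : ℤ) : ZMod q₁) = d₁ → ((z * qb₁ : ℤ) : ZMod q₂) = d₂ → d₁ ≠ 0 → d₂ ≠ 0 →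
      ∑ t : ZMod (q₁ * q₂),
          (∑ χ ∈ univ.filter (fun χ : DirichletCharacter ℂ (q₁ * q₂) => χ.IsPrimitive), χ t)
            * ZMod.stdAddChar ((z : ZMod (q₁ * q₂)) * t)
        = ((q₁.totient : ℂ) * ZMod.stdAddChar d₁ + 1)
          * ((q₂.totient : ℂ) * ZMod.stdAddChar d₂ + 1) := by
    intro z d₁ d₂ h₁ h₂ hne₁ hne₂
    have step : ∀ t : ZMod (q₁ * q₂),
        (∑ χ ∈ univ.filter (fun χ : DirichletCharacter ℂ (q₁ * q₂) => χ.IsPrimitive), χ t)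
            * ZMod.stdAddChar ((z : ZMod (q₁ * q₂)) * t)
          = ((∑ ψ₁ ∈ univ.filter (· ≠ (1 : DirichletCharacter ℂ q₁)),
                ψ₁ ((ZMod.castHom (dvd_mul_right q₁ q₂) (ZMod q₁)) t))
              * ZMod.stdAddChar (d₁ * (ZMod.castHom (dvd_mul_right q₁ q₂) (ZMod q₁)) t))
            * ((∑ ψ₂ ∈ univ.filter (· ≠ (1 : DirichletCharacter ℂ q₂)),
                ψ₂ ((ZMod.castHom (dvd_mul_left q₂ q₁) (ZMod q₂)) t))
              * ZMod.stdAddChar (d₂ * (ZMod.castHom (dvd_mul_left q₂ q₁) (ZMod q₂)) t)) := by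
      intro t
      rw [sum_prim hq₁ hq₂ hcop t, addchar_split q₁ q₂ qb₁ qb₂ hqb₂ hqb₁ hcop z t, h₁, h₂]
      ring
    rw [Finset.sum_congr rfl (fun t _ => step t),
      sum_factor hcop
        (fun a => (∑ ψ₁ ∈ univ.filter (· ≠ (1 : DirichletCharacter ℂ q₁)), ψ₁ a)
          * ZMod.stdAddChar (d₁ * a))
        (fun b => (∑ ψ₂ ∈ univ.filter (· ≠ (1 : DirichletCharacter ℂ q₂)), ψ₂ b)
          * ZMod.stdAddChar (d₂ * b)),
      G_eval hne₁, G_eval hne₂]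
  -- step 0: tsum to finite sum over a filter
  rw [tsum_fintype]
  rw [← Finset.sum_subtype
    (univ.filter (fun χ : DirichletCharacter ℂ (q₁ * q₂) => χ.IsPrimitive ∧ χ (-1) = 1))
    (fun χ => by simp)
    (fun χ : DirichletCharacter ℂ (q₁ * q₂) =>
      χ (m : ZMod (q₁ * q₂)) * (starRingEnd ℂ) (χ (n : ZMod (q₁ * q₂)))
        * gaussTau (q₁ * q₂) χ)]
  -- step 1: Gauss sum twist
  rw [Finset.sum_congr rfl (fun χ _ => tau_twist χ hnu hcu hmc)]
  -- step 2: swap sums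
  rw [Finset.sum_comm]
  -- step 3: even character sums via ± decomposition
  have step2 : ∀ t : ZMod (q₁ * q₂),
      (∑ χ ∈ univ.filter (fun χ : DirichletCharacter ℂ (q₁ * q₂) =>
          χ.IsPrimitive ∧ χ (-1) = 1), χ t * ZMod.stdAddChar (c * t))
        = (1/2 : ℂ) *
          ((∑ χ ∈ univ.filter (fun χ : DirichletCharacter ℂ (q₁ * q₂) => χ.IsPrimitive), χ t)
              * ZMod.stdAddChar (c * t)
            + (∑ χ ∈ univ.filter (fun χ : DirichletCharacter ℂ (q₁ * q₂) => χ.IsPrimitive),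
                χ (-t)) * ZMod.stdAddChar (c * t)) := by
    intro t
    rw [← Finset.sum_mul, sum_prim_even t]
    ring
  rw [Finset.sum_congr rfl (fun t _ => step2 t), ← Finset.mul_sum, Finset.sum_add_distrib]
  -- step 4: rewrite the two inner sums
  have hplus : ∑ t : ZMod (q₁ * q₂),
      (∑ χ ∈ univ.filter (fun χ : DirichletCharacter ℂ (q₁ * q₂) => χ.IsPrimitive), χ t)
        * ZMod.stdAddChar (c * t)
      = ((q₁.totient : ℂ) * ZMod.stdAddChar ((mb₁ * qb₂ * n : ℤ) : ZMod q₁) + 1)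
        * ((q₂.totient : ℂ) * ZMod.stdAddChar ((mb₂ * qb₁ * n : ℤ) : ZMod q₂) + 1) := by
    simp only [hcz]
    exact key (w * n) _ _ hd₁p hd₂p hd₁ne hd₂ne
  have hminus : ∑ t : ZMod (q₁ * q₂),
      (∑ χ ∈ univ.filter (fun χ : DirichletCharacter ℂ (q₁ * q₂) => χ.IsPrimitive), χ (-t))
        * ZMod.stdAddChar (c * t)
      = ((q₁.totient : ℂ) * ZMod.stdAddChar ((-(mb₁ * qb₂ * n) : ℤ) : ZMod q₁) + 1)
        * ((q₂.totient : ℂ) * ZMod.stdAddChar ((-(mb₂ * qb₁ * n) : ℤ) : ZMod q₂) + 1) := by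
    have hre : ∑ t : ZMod (q₁ * q₂),
        (∑ χ ∈ univ.filter (fun χ : DirichletCharacter ℂ (q₁ * q₂) => χ.IsPrimitive), χ (-t))
          * ZMod.stdAddChar (c * t)
        = ∑ t : ZMod (q₁ * q₂),
          (∑ χ ∈ univ.filter (fun χ : DirichletCharacter ℂ (q₁ * q₂) => χ.IsPrimitive), χ t)
            * ZMod.stdAddChar (((-(w * n) : ℤ) : ZMod (q₁ * q₂)) * t) := by
      refine Fintype.sum_bijective (fun t : ZMod (q₁ * q₂) => -t)
        (neg_involutive.bijective) _ _ (fun t => ?_)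
      have harg : ((-(w * n) : ℤ) : ZMod (q₁ * q₂)) * (-t) = c * t := by
        rw [hcz]; push_cast; ring
      rw [harg]
    rw [hre]
    exact key (-(w * n)) _ _ hd₁m hd₂m hd₁nem hd₂nem
  rw [hplus, hminus, stdAddChar_intCast, stdAddChar_intCast, stdAddChar_intCast,
    stdAddChar_intCast]
  push_cast
  ring
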